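/- arXiv:2403.04707 — 8 statements merged into one kernel-verified Lean document; each statement's English description precedes it below -/
import Mathlib

section
/- Let A ⊆ ℝⁿ be closed, a ∈ bdry A, ζ a unit vector, and r > 0 with B(a + rζ; r) ∩ A = ∅. Then for every x ∈ [a, a + rζ) (the half-open segment), the projection of x onto A is exactly {a}, i.e., a is the unique closest point of A to x. -/
open Metric Set

/-- The set of closest points of `A` to `x`. -/
def projSet {n : ℕ} (A : Set (EuclideanSpace ℝ (Fin n)))
    (x : EuclideanSpace ℝ (Fin n)) : Set (EuclideanSpace ℝ (Fin n)) :=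
  {a ∈ A | dist x a = Metric.infDist x A}

theorem stmt_2 {n : ℕ} (A : Set (EuclideanSpace ℝ (Fin n))) (hAc : IsClosed A)
    (a : EuclideanSpace ℝ (Fin n)) (ha : a ∈ frontier A)
    (ζ : EuclideanSpace ℝ (Fin n)) (hζ : ‖ζ‖ = 1) (r : ℝ) (hr : 0 < r)
    (hdisj : Metric.ball (a + r • ζ) r ∩ A = ∅) :
    ∀ t : ℝ, 0 ≤ t → t < r → projSet A (a + t • ζ) = {a} := by
  intro t ht htr
  have haA : a ∈ A := hAc.frontier_subset ha
  set c : EuclideanSpace ℝ (Fin n) := a + r • ζ with hc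
  set x : EuclideanSpace ℝ (Fin n) := a + t • ζ with hx
  have hxa : dist x a = t := by
    rw [dist_eq_norm]
    have : x - a = t • ζ := by rw [hx]; abel
    rw [this, norm_smul, hζ]
    simp [abs_of_nonneg ht]
  have hxc : dist x c = r - t := by
    rw [dist_eq_norm]
    have : x - c = (t - r) • ζ := by rw [hx, hc, sub_smul]; abel
    rw [this, norm_smul, hζ, Real.norm_eq_abs]
    rw [abs_of_nonpos (by linarith : t - r ≤ 0)]
    ring
  have hcx : c - x = (r - t) • ζ := by rw [hx, hc, sub_smul]; abel
  have key : ∀ b ∈ A, r ≤ dist b c := by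
    intro b hb
    by_contra h
    push_neg at h
    have : b ∈ Metric.ball c r ∩ A := ⟨Metric.mem_ball.2 h, hb⟩
    rw [hdisj] at this
    exact this
  have hlow : ∀ b ∈ A, t ≤ dist x b := by
    intro b hb
    have h1 := key b hb
    have h2 : dist b c ≤ dist b x + dist x c := dist_triangle b x c
    rw [dist_comm b x] at h2
    linarith
  have hinf : Metric.infDist x A = t := by
    apply le_antisymm
    · calc Metric.infDist x A ≤ dist x a := Metric.infDist_le_dist_of_mem haA
        _ = t := hxa
    · by_contra h
      push_neg at h
      obtain ⟨y, hyA, hyd⟩ := (Metric.infDist_lt_iff ⟨a, haA⟩).mp h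
      exact absurd hyd (not_lt.2 (hlow y hyA))
  ext b
  simp only [projSet, Set.mem_setOf_eq, Set.mem_singleton_iff, hinf]
  constructor
  · rintro ⟨hbA, hbd⟩
    have hbc : dist b c = r := by
      have h2 : dist b c ≤ dist b x + dist x c := dist_triangle b x c
      rw [dist_comm b x] at h2
      have := key b hbA
      linarith
    have heq : dist b x + dist x c = dist b c := by
      rw [dist_comm b x, hbd, hxc, hbc]; ring
    have hw : Wbtw ℝ b x c := dist_add_dist_eq_iff.mp heq
    have hsr : SameRay ℝ (x - b) (c - x) := by
      have := wbtw_iff_sameRay_vsub.mp hw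
      simpa using this
    have hn : ‖x - b‖ • (c - x) = ‖c - x‖ • (x - b) := sameRay_iff_norm_smul_eq.mp hsr
    have hnxb : ‖x - b‖ = t := by rw [← dist_eq_norm]; exact hbd
    have hncx : ‖c - x‖ = r - t := by
      rw [hcx, norm_smul, hζ]
      simp [abs_of_nonneg (by linarith : (0:ℝ) ≤ r - t)]
    rw [hnxb, hncx, hcx, smul_smul] at hn
    have hxb : x - b = t • ζ := by
      have hrt : r - t ≠ 0 := by intro h0; linarith [h0 ▸ (sub_pos.2 htr)]
      have h2 : (r - t) • (x - b) = (r - t) • (t • ζ) := by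
        rw [← hn, smul_smul, mul_comm]
      exact smul_right_injective _ hrt h2
    have hxa' : x - a = t • ζ := by rw [hx]; abel
    have h3 : x - b = x - a := by rw [hxb, hxa']
    have := sub_right_injective h3
    exact this
  · rintro rfl
    exact ⟨haA, hxa⟩
end

section
/- Let A ⊆ ℝⁿ be nonempty and closed, and let r : bdry A → (0, +∞) be continuous. Suppose that for every a ∈ bdry A and every unit proximal normal ζ ∈ N_A^P(a), the inequality ⟨ζ, x − a⟩ ≤ (1/(2r(a)))‖x − a‖² holds for all x ∈ A. Define ρ : Aᶜ → (0, +∞) by ρ(x) := min{ r(a)/2 : a ∈ proj_A(x) }. Then ρ is lower semicontinuous on Aᶜ (and the minimum defining ρ(x) is attained). -/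
open Metric Set

/-- The proximal normal cone to `A` at `a`. -/
def proxNormalCone {n : ℕ} (A : Set (EuclideanSpace ℝ (Fin n)))
    (a : EuclideanSpace ℝ (Fin n)) : Set (EuclideanSpace ℝ (Fin n)) :=
  {ζ | ∃ σ : ℝ, 0 ≤ σ ∧ ∀ y ∈ A, (inner ℝ ζ (y - a) : ℝ) ≤ σ * ‖y - a‖ ^ 2}

lemma projSet_nonempty {n : ℕ} {A : Set (EuclideanSpace ℝ (Fin n))} (hA : A.Nonempty)
    (hAc : IsClosed A) (x : EuclideanSpace ℝ (Fin n)) : (projSet A x).Nonempty := by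
  obtain ⟨a, ha, h⟩ := hAc.exists_infDist_eq_dist hA x
  exact ⟨a, ha, h.symm⟩

lemma projSet_isCompact {n : ℕ} {A : Set (EuclideanSpace ℝ (Fin n))}
    (hAc : IsClosed A) (x : EuclideanSpace ℝ (Fin n)) : IsCompact (projSet A x) := by
  have hsub : projSet A x ⊆ closedBall x (infDist x A) := by
    intro a ha
    simpa [mem_closedBall, dist_comm] using ha.2.le
  have hcl : IsClosed (projSet A x) := by
    have : IsClosed {a : EuclideanSpace ℝ (Fin n) | dist x a = infDist x A} :=
      isClosed_eq (by fun_prop) continuous_const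
    exact hAc.inter this
  exact (isCompact_closedBall x (infDist x A)).of_isClosed_subset hcl hsub

lemma projSet_subset_frontier {n : ℕ} {A : Set (EuclideanSpace ℝ (Fin n))}
    (hAc : IsClosed A) {x : EuclideanSpace ℝ (Fin n)} (hx : x ∉ A) :
    projSet A x ⊆ frontier A := by
  rintro a ⟨haA, had⟩
  rw [frontier_eq_closure_inter_closure]
  refine ⟨subset_closure haA, ?_⟩
  have hxa : x ≠ a := fun h => hx (h ▸ haA)
  have hd : (0:ℝ) < ‖x - a‖ := by
    rw [norm_sub_pos_iff]; exact hxa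
  have key : ∀ s : ℝ, 0 < s → s ≤ 1 → a + s • (x - a) ∉ A := by
    intro s hs hs1 hmem
    have : dist x (a + s • (x - a)) = (1 - s) * ‖x - a‖ := by
      rw [dist_eq_norm]
      have : x - (a + s • (x - a)) = (1 - s) • (x - a) := by
        rw [sub_smul, one_smul]; abel
      rw [this, norm_smul, Real.norm_eq_abs, abs_of_nonneg (by linarith)]
    have hlt : dist x (a + s • (x - a)) < infDist x A := by
      rw [this, ← had, dist_eq_norm]
      nlinarith
    exact absurd (infDist_le_dist_of_mem hmem) (not_le.2 hlt)
  have htend : Filter.Tendsto (fun k : ℕ => a + (1 / (k + 1) : ℝ) • (x - a))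
      Filter.atTop (nhds a) := by
    have h0 : Filter.Tendsto (fun k : ℕ => (1 / (k + 1) : ℝ)) Filter.atTop (nhds 0) :=
      tendsto_one_div_add_atTop_nhds_zero_nat
    have := ((h0.smul_const (x - a)).const_add a)
    simpa using this
  refine mem_closure_of_tendsto htend ?_
  filter_upwards with k
  exact key _ (by positivity) (by
    rw [div_le_one (by positivity)]; linarith [Nat.cast_nonneg (α := ℝ) k])

theorem stmt_4 {n : ℕ} (A : Set (EuclideanSpace ℝ (Fin n))) (hA : A.Nonempty)
    (hAc : IsClosed A) (r : EuclideanSpace ℝ (Fin n) → ℝ)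
    (hrpos : ∀ a ∈ frontier A, 0 < r a) (hrcont : ContinuousOn r (frontier A))
    (hsphere : ∀ a ∈ frontier A, ∀ ζ ∈ proxNormalCone A a, ‖ζ‖ = 1 →
      ∀ x ∈ A, (inner ℝ ζ (x - a) : ℝ) ≤ (1 / (2 * r a)) * ‖x - a‖ ^ 2)
    (ρ : EuclideanSpace ℝ (Fin n) → ℝ)
    (hρ : ∀ x, ρ x = sInf ((fun a => r a / 2) '' projSet A x)) :
    LowerSemicontinuousOn ρ Aᶜ ∧ ∀ x ∈ Aᶜ, ∃ a ∈ projSet A x, ρ x = r a / 2 := by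
  -- attainment of the minimum, together with minimality
  have hatt : ∀ x ∈ Aᶜ, ∃ a ∈ projSet A x, ρ x = r a / 2 ∧
      ∀ y ∈ projSet A x, r a / 2 ≤ r y / 2 := by
    intro x hx
    have hcomp := projSet_isCompact hAc x
    have hne := projSet_nonempty hA hAc x
    have hcont : ContinuousOn (fun a => r a / 2) (projSet A x) :=
      (hrcont.mono (projSet_subset_frontier hAc hx)).div_const 2
    obtain ⟨a, ha, h1, h2⟩ := hcomp.exists_sInf_image_eq_and_le hne hcont
    exact ⟨a, ha, by rw [hρ x]; exact h1, h2⟩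
  refine ⟨?_, fun x hx => (hatt x hx).imp fun a h => ⟨h.1, h.2.1⟩⟩
  intro x hx c hc
  by_contra hcon
  rw [Filter.not_eventually] at hcon
  have hfreq : ∃ᶠ y in nhdsWithin x Aᶜ, ρ y ≤ c ∧ y ∈ Aᶜ := by
    apply Filter.Frequently.and_eventually _ self_mem_nhdsWithin
    exact hcon.mono fun y hy => not_lt.1 hy
  obtain ⟨u, hu, hup⟩ := Filter.exists_seq_forall_of_frequently hfreq
  have huA : ∀ k, u k ∈ Aᶜ := fun k => (hup k).2
  have huρ : ∀ k, ρ (u k) ≤ c := fun k => (hup k).1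
  have hux : Filter.Tendsto u Filter.atTop (nhds x) :=
    hu.mono_right nhdsWithin_le_nhds
  -- choose minimizers
  choose a haP haρ _ using fun k => hatt (u k) (huA k)
  have haF : ∀ k, a k ∈ frontier A := fun k =>
    projSet_subset_frontier hAc (huA k) (haP k)
  -- the sequence a is bounded
  have hinf : Filter.Tendsto (fun k => infDist (u k) A) Filter.atTop
      (nhds (infDist x A)) := ((continuous_infDist_pt A).tendsto x).comp hux
  have hdx : Filter.Tendsto (fun k => dist (u k) x) Filter.atTop (nhds 0) :=
    tendsto_iff_dist_tendsto_zero.1 hux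
  have hbd : Filter.Tendsto (fun k => infDist (u k) A + dist (u k) x) Filter.atTop
      (nhds (infDist x A + 0)) := hinf.add hdx
  obtain ⟨M, hM⟩ := hbd.bddAbove_range
  have haM : ∀ k, a k ∈ frontier A ∩ closedBall x M := by
    intro k
    refine ⟨haF k, ?_⟩
    have h1 : dist (a k) x ≤ dist (a k) (u k) + dist (u k) x := dist_triangle _ _ _
    have h2 : dist (a k) (u k) = infDist (u k) A := by
      rw [dist_comm]; exact (haP k).2
    have h3 : infDist (u k) A + dist (u k) x ≤ M := hM ⟨k, rfl⟩
    simpa [mem_closedBall] using h1.trans (by rw [h2]; exact h3)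
  have hKcomp : IsCompact (frontier A ∩ closedBall x M) :=
    (isCompact_closedBall x M).inter_left isClosed_frontier
  obtain ⟨b, hb, φ, hφ, hbt⟩ := hKcomp.tendsto_subseq haM
  have hbF : b ∈ frontier A := hb.1
  -- b is a closest point of A to x
  have hbP : b ∈ projSet A x := by
    refine ⟨hAc.closure_eq ▸ frontier_subset_closure hbF, ?_⟩
    have h1 : Filter.Tendsto (fun k => dist (u (φ k)) (a (φ k))) Filter.atTop
        (nhds (dist x b)) :=
      ((hux.comp hφ.tendsto_atTop).dist hbt)
    have h2 : Filter.Tendsto (fun k => dist (u (φ k)) (a (φ k))) Filter.atTop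
        (nhds (infDist x A)) := by
      have : (fun k => dist (u (φ k)) (a (φ k))) = fun k => infDist (u (φ k)) A := by
        funext k; exact (haP (φ k)).2
      rw [this]
      exact hinf.comp hφ.tendsto_atTop
    exact tendsto_nhds_unique h1 h2
  -- r b / 2 ≤ c by continuity
  have hrb : Filter.Tendsto (fun k => r (a (φ k))) Filter.atTop (nhds (r b)) := by
    apply (hrcont b hbF).tendsto.comp
    rw [tendsto_nhdsWithin_iff]
    exact ⟨hbt, Filter.Eventually.of_forall fun k => haF (φ k)⟩
  have hrbc : r b / 2 ≤ c := by
    have : ∀ k, r (a (φ k)) / 2 ≤ c := fun k => (haρ (φ k)) ▸ huρ (φ k)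
    exact le_of_tendsto (hrb.div_const 2) (Filter.Eventually.of_forall this)
  -- but ρ x ≤ r b / 2
  obtain ⟨a₀, ha₀, hρx, hmin⟩ := hatt x hx
  have : ρ x ≤ r b / 2 := hρx ▸ hmin b hbP
  linarith [hc.trans_le this]
end

section
/- Let x, y ∈ ℝⁿ with y ≠ x, let ρ_x > 0 and R > 0 satisfy ‖y − x‖ ≥ R, and define ρ* := ρ_x²‖y − x‖ / (‖y − x‖² + ρ_x² − R²) > 0. Then the open ball B(x + ρ*(y − x)/‖y − x‖; ρ*) is contained in B(x; ρ_x) ∪ B(y; R). -/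
open Metric Set RealInnerProductSpace

set_option maxHeartbeats 1000000 in
theorem stmt_7 {n : ℕ} (x y : EuclideanSpace ℝ (Fin n)) (hxy : y ≠ x)
    (ρx R : ℝ) (hρx : 0 < ρx) (hR : 0 < R) (hyx : R ≤ ‖y - x‖) :
    Metric.ball
        (x + (ρx ^ 2 * ‖y - x‖ / (‖y - x‖ ^ 2 + ρx ^ 2 - R ^ 2)) •
          (‖y - x‖⁻¹ • (y - x)))
        (ρx ^ 2 * ‖y - x‖ / (‖y - x‖ ^ 2 + ρx ^ 2 - R ^ 2)) ⊆
      Metric.ball x ρx ∪ Metric.ball y R := by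
  set d : ℝ := ‖y - x‖ with hd
  have hd0 : 0 < d := by rw [hd]; exact norm_sub_pos_iff.mpr hxy
  have hD : 0 < d ^ 2 + ρx ^ 2 - R ^ 2 := by nlinarith
  set D : ℝ := d ^ 2 + ρx ^ 2 - R ^ 2 with hDdef
  set ρ : ℝ := ρx ^ 2 * d / D with hρdef
  have hρ0 : 0 < ρ := div_pos (by positivity) hD
  set u : EuclideanSpace ℝ (Fin n) := d⁻¹ • (y - x) with hu
  have hun : ‖u‖ = 1 := by
    rw [hu, norm_smul, norm_inv, Real.norm_eq_abs, abs_of_pos hd0, ← hd,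
      inv_mul_cancel₀ hd0.ne']
  have hdu : d • u = y - x := by
    rw [hu, smul_smul, mul_inv_cancel₀ hd0.ne', one_smul]
  intro z hz
  rw [mem_ball, dist_eq_norm] at hz
  set v : EuclideanSpace ℝ (Fin n) := z - (x + ρ • u) with hv
  have hzx : z - x = v + ρ • u := by rw [hv]; abel
  have hzy : z - y = v + (ρ - d) • u := by
    rw [hv, sub_smul, hdu]; abel
  set t : ℝ := (inner ℝ v u : ℝ) with ht
  have expand : ∀ a : ℝ, ‖v + a • u‖ ^ 2 = ‖v‖ ^ 2 + 2 * a * t + a ^ 2 := by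
    intro a
    rw [@norm_add_sq_real, real_inner_smul_right, norm_smul, Real.norm_eq_abs,
      hun, mul_pow, sq_abs]
    ring
  have hA : ‖z - x‖ ^ 2 = ‖v‖ ^ 2 + 2 * ρ * t + ρ ^ 2 := by rw [hzx, expand]
  have hB : ‖z - y‖ ^ 2 = ‖v‖ ^ 2 + 2 * (ρ - d) * t + (ρ - d) ^ 2 := by
    rw [hzy, expand]
  have hvρ : ‖v‖ < ρ := hz
  have hv0 : 0 ≤ ‖v‖ := norm_nonneg _
  have hρD : ρ * D = ρx ^ 2 * d := by
    rw [hρdef]; field_simp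
  clear_value t v u ρ D d
  have hdρ : ρ ≤ d := by nlinarith [mul_nonneg (mul_nonneg hd0.le
    (sub_nonneg.mpr hyx)) (by linarith : (0:ℝ) ≤ d + R)]
  have hkey : ρ * (d ^ 2 - R ^ 2) = (d - ρ) * ρx ^ 2 := by
    rw [hDdef] at hρD; nlinarith [hρD]
  by_cases hzx' : ‖z - x‖ < ρx
  · exact Or.inl (by rwa [mem_ball, dist_eq_norm])
  · right
    rw [mem_ball, dist_eq_norm]
    push_neg at hzx'
    have hzx2 : ρx ^ 2 ≤ ‖z - x‖ ^ 2 := pow_le_pow_left₀ hρx.le hzx' 2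
    have hiden : (d - ρ) * ‖z - x‖ ^ 2 + ρ * ‖z - y‖ ^ 2
        = d * (‖v‖ ^ 2 + ρ * (d - ρ)) := by
      rw [hA, hB]; ring
    have h1 : (d - ρ) * ρx ^ 2 ≤ (d - ρ) * ‖z - x‖ ^ 2 :=
      mul_le_mul_of_nonneg_left hzx2 (by linarith)
    have h2 : d * ‖v‖ ^ 2 < d * ρ ^ 2 :=
      mul_lt_mul_of_pos_left (by nlinarith : ‖v‖ ^ 2 < ρ ^ 2) hd0
    have hBR : ρ * ‖z - y‖ ^ 2 < ρ * R ^ 2 := by linarith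
    have hBR2 : ‖z - y‖ ^ 2 < R ^ 2 := (mul_lt_mul_iff_right₀ hρ0).mp hBR
    nlinarith [norm_nonneg (z - y)]
end

section
/- Let x ∈ ℝⁿ and let (ω_n) be a sequence of unit vectors converging to a unit vector ω₀, and let (R_n) be a sequence of positive reals with R_n → +∞. Suppose Ω ⊆ ℝⁿ is a set with B̄(x + R_n ω_n; R_n) ⊆ Ω for all n. Then for every δ > 0, the closed ball B̄(x + δω₀; δ) is contained in ⋃ₙ B̄(x + R_n ω_n; R_n) ∪ {x} ⊆ Ω ∪ {x}; in particular every point v with ‖v − x − δω₀‖ < δ lies in some B̄(x + R_n ω_n; R_n). -/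
open Metric Set Filter
open scoped RealInnerProductSpace

theorem stmt_11 {n : ℕ} (x : EuclideanSpace ℝ (Fin n))
    (ω : ℕ → EuclideanSpace ℝ (Fin n)) (ω₀ : EuclideanSpace ℝ (Fin n))
    (hω : ∀ k, ‖ω k‖ = 1) (hω₀ : ‖ω₀‖ = 1)
    (hconv : Tendsto ω atTop (nhds ω₀))
    (R : ℕ → ℝ) (hRpos : ∀ k, 0 < R k) (hRtop : Tendsto R atTop atTop)
    (Ω : Set (EuclideanSpace ℝ (Fin n)))
    (hΩ : ∀ k, Metric.closedBall (x + R k • ω k) (R k) ⊆ Ω) :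
    ∀ δ : ℝ, 0 < δ →
      Metric.closedBall (x + δ • ω₀) δ ⊆
        (⋃ k, Metric.closedBall (x + R k • ω k) (R k)) ∪ {x} ∧
      (⋃ k, Metric.closedBall (x + R k • ω k) (R k)) ∪ {x} ⊆ Ω ∪ {x} ∧
      ∀ v, ‖v - x - δ • ω₀‖ < δ → ∃ k, v ∈ Metric.closedBall (x + R k • ω k) (R k) := by
  intro δ hδ
  have key : ∀ v, v ∈ Metric.closedBall (x + δ • ω₀) δ →
      ∃ k, v ∈ Metric.closedBall (x + R k • ω k) (R k) := by
    intro v hv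
    by_cases hvx : v = x
    · refine ⟨0, ?_⟩
      simp only [hvx, Metric.mem_closedBall, dist_self_add_right, norm_smul,
        Real.norm_eq_abs, hω 0, mul_one, abs_of_pos (hRpos 0), le_refl]
    · set u := v - x with hu
      have hune : u ≠ 0 := sub_ne_zero.mpr hvx
      have h1 : ‖u - δ • ω₀‖ ≤ δ := by
        have hv' := Metric.mem_closedBall.mp hv
        rw [dist_eq_norm] at hv'
        have heq : v - (x + δ • ω₀) = u - δ • ω₀ := by rw [hu]; abel
        rwa [heq] at hv'
      have h2 : ‖u - δ • ω₀‖ ^ 2 ≤ δ ^ 2 :=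
        pow_le_pow_left₀ (norm_nonneg _) h1 2
      rw [@norm_sub_sq_real] at h2
      have hinner0 : ‖u‖ ^ 2 ≤ 2 * δ * (inner ℝ u ω₀ : ℝ) := by
        have hn : ‖δ • ω₀‖ ^ 2 = δ ^ 2 := by
          rw [norm_smul, Real.norm_eq_abs, hω₀, mul_one, sq_abs]
        rw [real_inner_smul_right, hn] at h2
        nlinarith
      have hpos : 0 < (inner ℝ u ω₀ : ℝ) := by
        have : (0:ℝ) < ‖u‖ ^ 2 := pow_pos (norm_pos_iff.mpr hune) 2
        nlinarith
      -- limits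
      have hf : Tendsto (fun k => (inner ℝ u (ω k) : ℝ)) atTop (nhds (inner ℝ u ω₀ : ℝ)) :=
        (Filter.Tendsto.inner tendsto_const_nhds hconv)
      have hg : Tendsto (fun k => ‖u‖ ^ 2 / (2 * R k)) atTop (nhds 0) :=
        Tendsto.div_atTop tendsto_const_nhds (hRtop.const_mul_atTop two_pos)
      have hdiff : Tendsto (fun k => (inner ℝ u (ω k) : ℝ) - ‖u‖ ^ 2 / (2 * R k)) atTop
          (nhds ((inner ℝ u ω₀ : ℝ) - 0)) := hf.sub hg
      have hev : ∀ᶠ k in atTop, 0 < (inner ℝ u (ω k) : ℝ) - ‖u‖ ^ 2 / (2 * R k) :=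
        hdiff.eventually (eventually_gt_nhds (by simpa using hpos))
      obtain ⟨k, hk⟩ := hev.exists
      refine ⟨k, ?_⟩
      have hRk := hRpos k
      have hmul : ‖u‖ ^ 2 ≤ 2 * R k * (inner ℝ u (ω k) : ℝ) := by
        have h2R : (0:ℝ) < 2 * R k := by linarith
        have := (div_lt_iff₀ h2R).mp (by linarith [hk] : ‖u‖ ^ 2 / (2 * R k) < (inner ℝ u (ω k) : ℝ))
        nlinarith
      have hsq : ‖u - R k • ω k‖ ^ 2 ≤ (R k) ^ 2 := by
        rw [@norm_sub_sq_real, real_inner_smul_right, norm_smul, Real.norm_eq_abs,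
          hω k, mul_one, sq_abs]
        nlinarith
      rw [Metric.mem_closedBall, dist_eq_norm]
      have heq : v - (x + R k • ω k) = u - R k • ω k := by rw [hu]; abel
      rw [heq]
      calc ‖u - R k • ω k‖ = Real.sqrt (‖u - R k • ω k‖ ^ 2) := by
              rw [Real.sqrt_sq (norm_nonneg _)]
        _ ≤ Real.sqrt ((R k) ^ 2) := Real.sqrt_le_sqrt hsq
        _ = R k := Real.sqrt_sq hRk.le
  refine ⟨?_, ?_, ?_⟩
  · intro v hv
    obtain ⟨k, hk⟩ := key v hv
    exact Or.inl (Set.mem_iUnion.mpr ⟨k, hk⟩)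
  · intro y hy
    rcases hy with hy | hy
    · obtain ⟨k, hk⟩ := Set.mem_iUnion.mp hy
      exact Or.inl (hΩ k hk)
    · exact Or.inr hy
  · intro v hlt
    apply key
    rw [Metric.mem_closedBall, dist_eq_norm]
    have : v - (x + δ • ω₀) = v - x - δ • ω₀ := by abel
    rw [this]
    exact hlt.le
end

section
/- Let A ⊆ ℝⁿ be nonempty and closed, and let r : bdry A → (0, +∞] be continuous (with the convention 1/(+∞) = 0). Suppose A satisfies the extended exterior r(·)-sphere condition. Then N_A^P(a) ≠ {0} for every a ∈ bdry A; more precisely, for each a ∈ bdry A there exists a unit vector ζ_a ∈ N_A^P(a) such that ⟨ζ_a, x − a⟩ ≤ (1/(2r(a)))‖x − a‖² for all x ∈ A. -/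
open Metric Set ENNReal

/-- `A` satisfies the extended exterior `r(·)`-sphere condition, where
`r : bdry A → (0, +∞]` is encoded with values in `ℝ≥0∞` and the proximal normal
inequality constant `1/(2 r a)` is `((2 * r a)⁻¹).toReal` (so `= 0` when `r a = ∞`). -/
def ExtExtSphere {n : ℕ} (A : Set (EuclideanSpace ℝ (Fin n)))
    (r : EuclideanSpace ℝ (Fin n) → ℝ≥0∞) : Prop :=
  ∀ a ∈ frontier A,
    (a ∈ frontier (interior A) →
      ∃ ζ, ‖ζ‖ = 1 ∧ ζ ∈ proxNormalCone A a ∧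
        ∀ x ∈ A, (inner ℝ ζ (x - a) : ℝ) ≤ ((2 * r a)⁻¹).toReal * ‖x - a‖ ^ 2) ∧
    (a ∉ frontier (interior A) →
      ∀ ζ, ‖ζ‖ = 1 → ζ ∈ proxNormalCone A a →
        ∀ x ∈ A, (inner ℝ ζ (x - a) : ℝ) ≤ ((2 * r a)⁻¹).toReal * ‖x - a‖ ^ 2)

lemma dense_prox {n : ℕ} {A : Set (EuclideanSpace ℝ (Fin n))} (hA : A.Nonempty)
    (hAc : IsClosed A) {a : EuclideanSpace ℝ (Fin n)} (ha : a ∈ frontier A)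
    {ε : ℝ} (hε : 0 < ε) :
    ∃ p ∈ frontier A, dist p a < ε ∧ ∃ ζ, ‖ζ‖ = 1 ∧ ζ ∈ proxNormalCone A p := by
  have haA : a ∈ A := hAc.closure_eq ▸ ha.1
  have hanotint : a ∉ interior A := ha.2
  have hacl : a ∈ closure Aᶜ := by rwa [closure_compl, Set.mem_compl_iff]
  obtain ⟨b, hbA, hab⟩ := Metric.mem_closure_iff.1 hacl (ε / 3) (by linarith)
  obtain ⟨p, hpA, hpd⟩ := hAc.exists_infDist_eq_dist hA b
  set d := dist b p with hd
  have hmin : ∀ y ∈ A, d ≤ dist b y := fun y hy => hpd ▸ Metric.infDist_le_dist_of_mem hy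
  have hdpos : 0 < d := by
    rcases lt_or_eq_of_le (dist_nonneg : (0:ℝ) ≤ dist b p) with h | h
    · exact h
    · exact absurd (dist_eq_zero.1 h.symm ▸ hpA) hbA
  set ζ : EuclideanSpace ℝ (Fin n) := d⁻¹ • (b - p) with hζ
  have hbp : ‖b - p‖ = d := by rw [hd, dist_eq_norm]
  have hζnorm : ‖ζ‖ = 1 := by
    rw [hζ, norm_smul, hbp, Real.norm_eq_abs, abs_of_pos (inv_pos.2 hdpos)]
    field_simp
  have hineq : ∀ y ∈ A, (inner ℝ ζ (y - p) : ℝ) ≤ (2 * d)⁻¹ * ‖y - p‖ ^ 2 := by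
    intro y hy
    have h1 : d ^ 2 ≤ dist b y ^ 2 := by
      have := hmin y hy; nlinarith [dist_nonneg (x := b) (y := p)]
    have h2 : dist b y ^ 2 = ‖(b - p) - (y - p)‖ ^ 2 := by
      rw [dist_eq_norm]; congr 1; abel_nf
    have h3 : ‖(b - p) - (y - p)‖ ^ 2
        = ‖b - p‖ ^ 2 - 2 * (inner ℝ (b - p) (y - p) : ℝ) + ‖y - p‖ ^ 2 :=
      norm_sub_sq_real _ _
    have h4 : (inner ℝ (b - p) (y - p) : ℝ) ≤ 2⁻¹ * ‖y - p‖ ^ 2 := by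
      rw [h2, h3, hbp] at h1; nlinarith
    have h5 : (inner ℝ ζ (y - p) : ℝ) = d⁻¹ * (inner ℝ (b - p) (y - p) : ℝ) :=
      real_inner_smul_left _ _ _
    rw [h5, mul_inv]
    have := mul_le_mul_of_nonneg_left h4 (le_of_lt (inv_pos.2 hdpos))
    calc d⁻¹ * (inner ℝ (b - p) (y - p) : ℝ) ≤ d⁻¹ * (2⁻¹ * ‖y - p‖ ^ 2) := this
      _ = 2⁻¹ * d⁻¹ * ‖y - p‖ ^ 2 := by ring
  have hpfr : p ∈ frontier A := by
    constructor
    · exact subset_closure hpA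
    · intro hint
      obtain ⟨s, hs, hball⟩ := Metric.isOpen_iff.1 isOpen_interior p hint
      set t : ℝ := min (s / (2 * d)) 2⁻¹ with ht
      have htpos : 0 < t := lt_min (by positivity) (by norm_num)
      have htle : t ≤ 2⁻¹ := min_le_right _ _
      set q := p + t • (b - p) with hq
      have hqp : dist q p = t * d := by
        rw [hq, dist_eq_norm]
        simp only [add_sub_cancel_left, norm_smul, Real.norm_eq_abs,
          abs_of_pos htpos, hbp]
      have hqA : q ∈ A := by
        apply interior_subset; apply hball
        rw [Metric.mem_ball, hqp]
        calc t * d ≤ s / (2 * d) * d := by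
              apply mul_le_mul_of_nonneg_right (min_le_left _ _) hdpos.le
          _ = s / 2 := by field_simp
          _ < s := by linarith
      have hbq : dist b q = (1 - t) * d := by
        rw [dist_eq_norm]
        have : b - q = (1 - t) • (b - p) := by
          rw [hq]; rw [sub_smul, one_smul]; abel
        rw [this, norm_smul, Real.norm_eq_abs, abs_of_pos (by linarith : (0:ℝ) < 1 - t), hbp]
      have := hmin q hqA
      rw [hbq] at this
      nlinarith
  refine ⟨p, hpfr, ?_, ζ, hζnorm, (2 * d)⁻¹, by positivity, hineq⟩
  have h1 : d ≤ dist b a := hmin a haA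
  calc dist p a ≤ dist p b + dist b a := dist_triangle _ _ _
    _ = d + dist b a := by rw [dist_comm]
    _ ≤ dist b a + dist b a := by linarith
    _ = 2 * dist a b := by rw [dist_comm]; ring
    _ < ε := by linarith

theorem stmt_12 {n : ℕ} (A : Set (EuclideanSpace ℝ (Fin n))) (hA : A.Nonempty)
    (hAc : IsClosed A) (r : EuclideanSpace ℝ (Fin n) → ℝ≥0∞)
    (hrpos : ∀ a ∈ frontier A, 0 < r a) (hrcont : ContinuousOn r (frontier A))
    (hext : ExtExtSphere A r) :
    ∀ a ∈ frontier A,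
      proxNormalCone A a ≠ {0} ∧
      ∃ ζ, ‖ζ‖ = 1 ∧ ζ ∈ proxNormalCone A a ∧
        ∀ x ∈ A, (inner ℝ ζ (x - a) : ℝ) ≤ ((2 * r a)⁻¹).toReal * ‖x - a‖ ^ 2 := by
  intro a ha
  suffices h : ∃ ζ, ‖ζ‖ = 1 ∧ ζ ∈ proxNormalCone A a ∧
      ∀ x ∈ A, (inner ℝ ζ (x - a) : ℝ) ≤ ((2 * r a)⁻¹).toReal * ‖x - a‖ ^ 2 by
    obtain ⟨ζ, hζ1, hζc, hζi⟩ := h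
    refine ⟨fun hcontra => ?_, ζ, hζ1, hζc, hζi⟩
    rw [hcontra] at hζc
    simp only [Set.mem_singleton_iff] at hζc
    rw [hζc, norm_zero] at hζ1
    norm_num at hζ1
  by_cases hfi : a ∈ frontier (interior A)
  · exact (hext a ha).1 hfi
  -- main case: a ∉ frontier (interior A)
  have hanotint : a ∉ interior A := ha.2
  have hacl : a ∉ closure (interior A) := by
    intro h
    exact hfi ⟨h, by simpa using hanotint⟩
  obtain ⟨δ, hδ, hball⟩ := Metric.isOpen_iff.1 (isClosed_closure.isOpen_compl)
    a (Set.mem_compl hacl)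
  -- sequence of boundary points with unit proximal normals
  have hseq : ∀ k : ℕ, ∃ p ∈ frontier A, dist p a < 1 / (k + 1) ∧
      ∃ ζ, ‖ζ‖ = 1 ∧ ζ ∈ proxNormalCone A p :=
    fun k => dense_prox hA hAc ha (by positivity)
  choose p hpfr hpdist ζ hζnorm hζcone using hseq
  have hptend : Filter.Tendsto p Filter.atTop (nhds a) := by
    rw [tendsto_iff_dist_tendsto_zero]
    apply squeeze_zero (fun k => dist_nonneg) (fun k => (hpdist k).le)
    exact tendsto_one_div_add_atTop_nhds_zero_nat
  -- eventually p k is not on frontier (interior A)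
  have hev : ∀ᶠ k in Filter.atTop, ∀ x ∈ A,
      (inner ℝ (ζ k) (x - p k) : ℝ) ≤ ((2 * r (p k))⁻¹).toReal * ‖x - p k‖ ^ 2 := by
    have hevδ : ∀ᶠ k in Filter.atTop, p k ∈ Metric.ball a δ := by
      have := Metric.tendsto_nhds.1 hptend δ hδ
      simpa [Metric.mem_ball] using this
    filter_upwards [hevδ] with k hk
    have hnot : p k ∉ frontier (interior A) := fun hmem =>
      (hball hk) (hmem.1)
    exact (hext (p k) (hpfr k)).2 hnot (ζ k) (hζnorm k) (hζcone k)
  -- extract convergent subsequence of unit normals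
  have hsphere : ∀ k, ζ k ∈ Metric.sphere (0 : EuclideanSpace ℝ (Fin n)) 1 :=
    fun k => by simp [hζnorm k]
  obtain ⟨ζL, hζLmem, φ, hφ, hζtend⟩ :=
    (isCompact_sphere (0 : EuclideanSpace ℝ (Fin n)) 1).tendsto_subseq hsphere
  have hζLnorm : ‖ζL‖ = 1 := by simpa using hζLmem
  have hφtop : Filter.Tendsto φ Filter.atTop Filter.atTop := hφ.tendsto_atTop
  have hptendφ : Filter.Tendsto (fun j => p (φ j)) Filter.atTop (nhds a) :=
    hptend.comp hφtop
  -- convergence of constants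
  have hrtend : Filter.Tendsto (fun j => r (p (φ j))) Filter.atTop (nhds (r a)) := by
    apply (hrcont a ha).tendsto.comp
    rw [tendsto_nhdsWithin_iff]
    exact ⟨hptendφ, Filter.Eventually.of_forall fun j => hpfr (φ j)⟩
  have hne : (2 : ℝ≥0∞) * r a ≠ 0 := by
    simp [ (hrpos a ha).ne' ]
  have hinvtend : Filter.Tendsto (fun j => (2 * r (p (φ j)))⁻¹)
      Filter.atTop (nhds ((2 * r a)⁻¹)) := by
    apply ENNReal.tendsto_inv_iff.2
    exact ENNReal.Tendsto.const_mul hrtend (Or.inr (by norm_num))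
  have hctend : Filter.Tendsto (fun j => ((2 * r (p (φ j)))⁻¹).toReal)
      Filter.atTop (nhds ((2 * r a)⁻¹).toReal) :=
    (ENNReal.tendsto_toReal (by simp [hne])).comp hinvtend
  -- final inequality by passing to the limit
  have hfinal : ∀ x ∈ A, (inner ℝ ζL (x - a) : ℝ) ≤ ((2 * r a)⁻¹).toReal * ‖x - a‖ ^ 2 := by
    intro x hx
    have hf : Filter.Tendsto (fun j => (inner ℝ (ζ (φ j)) (x - p (φ j)) : ℝ))
        Filter.atTop (nhds (inner ℝ ζL (x - a) : ℝ)) :=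
      hζtend.inner (tendsto_const_nhds.sub hptendφ)
    have hg : Filter.Tendsto (fun j => ((2 * r (p (φ j)))⁻¹).toReal * ‖x - p (φ j)‖ ^ 2)
        Filter.atTop (nhds (((2 * r a)⁻¹).toReal * ‖x - a‖ ^ 2)) :=
      hctend.mul (((tendsto_const_nhds.sub hptendφ).norm).pow 2)
    refine le_of_tendsto_of_tendsto hf hg ?_
    filter_upwards [hφtop.eventually hev] with j hj
    exact hj x hx
  exact ⟨ζL, hζLnorm, ⟨((2 * r a)⁻¹).toReal, ENNReal.toReal_nonneg, hfinal⟩, hfinal⟩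
end

section
/- The set of boundary points of a nonempty closed set A ⊆ ℝⁿ admitting a nonzero proximal normal is dense in bdry A: for every a ∈ bdry A and ε > 0, there exists b ∈ bdry A with ‖b − a‖ < ε and N_A^P(b) ≠ {0}. -/
open Metric Set

theorem stmt_13 {n : ℕ} (A : Set (EuclideanSpace ℝ (Fin n))) (hA : A.Nonempty)
    (hAc : IsClosed A) :
    ∀ a ∈ frontier A, ∀ ε : ℝ, 0 < ε →
      ∃ b ∈ frontier A, ‖b - a‖ < ε ∧ proxNormalCone A b ≠ {0} := by
  intro a ha ε hε
  -- `a` is in the closure of the complement of `A`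
  have haC : a ∈ closure Aᶜ := by
    rw [frontier_eq_closure_inter_closure] at ha
    exact ha.2
  -- pick `x ∉ A` with `dist a x < ε/2`
  obtain ⟨x, hxA, hxd⟩ : ∃ x ∈ Aᶜ, dist a x < ε / 2 :=
    Metric.mem_closure_iff.mp haC (ε / 2) (by linarith)
  -- pick a closest point `b ∈ A` to `x`
  obtain ⟨b, hbA, hbd⟩ := hAc.exists_infDist_eq_dist hA x
  have hxb_ne : x ≠ b := fun h => hxA (h ▸ hbA)
  have hxb_pos : 0 < dist x b := dist_pos.mpr hxb_ne
  -- `b` is a closest point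
  have hmin : ∀ y ∈ A, dist x b ≤ dist x y := fun y hy =>
    hbd ▸ infDist_le_dist_of_mem hy
  have hxbxa : dist x b ≤ dist x a := by
    have := hmin a (by
      by_contra h
      exact absurd (frontier_subset_closure ha) (fun h' => h (hAc.closure_subset h'))
      )
    exact this
  -- `b` is in the frontier of `A`
  have hbF : b ∈ frontier A := by
    rw [frontier_eq_closure_inter_closure]
    constructor
    · exact subset_closure hbA
    · rw [Metric.mem_closure_iff]
      intro δ hδ
      set t : ℝ := min (δ / (2 * dist x b)) (1 / 2) with ht
      have ht0 : 0 < t := lt_min (by positivity) (by norm_num)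
      have ht1 : t < 1 := lt_of_le_of_lt (min_le_right _ _) (by norm_num)
      refine ⟨b + t • (x - b), ?_, ?_⟩
      · intro hz
        have h1 : dist x (b + t • (x - b)) = (1 - t) * dist x b := by
          rw [dist_eq_norm, dist_eq_norm]
          have : x - (b + t • (x - b)) = (1 - t) • (x - b) := by
            module
          rw [this, norm_smul, Real.norm_eq_abs, abs_of_pos (by linarith)]
        have h2 := hmin _ hz
        rw [h1] at h2
        nlinarith
      · have : dist b (b + t • (x - b)) = t * dist x b := by
          rw [dist_eq_norm, dist_eq_norm]
          have : b - (b + t • (x - b)) = (-t) • (x - b) := by module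
          rw [this, norm_smul, Real.norm_eq_abs, abs_neg, abs_of_pos ht0]
        rw [this]
        have : t ≤ δ / (2 * dist x b) := min_le_left _ _
        calc t * dist x b ≤ δ / (2 * dist x b) * dist x b := by
              exact mul_le_mul_of_nonneg_right this hxb_pos.le
          _ = δ / 2 := by field_simp
          _ < δ := by linarith
  -- distance estimate
  have hba : ‖b - a‖ < ε := by
    have h1 : ‖b - a‖ ≤ dist b x + dist x a := by
      rw [show ‖b - a‖ = dist b a from (dist_eq_norm b a).symm]
      exact dist_triangle b x a
    have h2 : dist b x = dist x b := dist_comm b x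
    have h3 : dist x a < ε / 2 := by rw [dist_comm]; exact hxd
    linarith [hxbxa]
  -- nonzero proximal normal
  refine ⟨b, hbF, hba, ?_⟩
  have hmem : (x - b) ∈ proxNormalCone A b := by
    refine ⟨1/2, by norm_num, fun y hy => ?_⟩
    have h := hmin y hy
    rw [dist_eq_norm, dist_eq_norm] at h
    have hexp : ‖x - y‖ ^ 2 = ‖x - b‖ ^ 2 - 2 * inner ℝ (x - b) (y - b) + ‖y - b‖ ^ 2 := by
      have : x - y = (x - b) - (y - b) := by module
      rw [this, @norm_sub_sq_real]
    nlinarith [norm_nonneg (x - y), norm_nonneg (x - b), sq_nonneg (‖x-y‖ - ‖x-b‖)]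
  intro hcone
  rw [hcone] at hmem
  exact hxb_ne (by simpa [sub_eq_zero] using hmem)
end

section
/- Let A ⊆ ℝⁿ be nonempty and closed, S ⊇ A, and suppose A is S-convex. If s ∈ S is such that the set [proj_A(s), s] (the union of all segments [a, s] with a ∈ proj_A(s)) is contained in S, then s has a unique closest point in A. -/
open Metric Set

/-- `A` is `S`-convex (segment-inclusion formulation). -/
def SConvexSet {n : ℕ} (A S : Set (EuclideanSpace ℝ (Fin n))) : Prop :=
  ∀ s ∈ S \ A, ∀ a ∈ frontier A, ∀ a' ∈ frontier A, a ≠ a' →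
    segment ℝ a s ⊆ S → segment ℝ a' s ⊆ S →
    (s - a) ∉ proxNormalCone A a ∨ (s - a') ∉ proxNormalCone A a'

/-- If `a` is a closest point of `A` to `s`, then `s - a` is a proximal normal to `A` at `a`. -/
lemma proj_normal {n : ℕ} {A : Set (EuclideanSpace ℝ (Fin n))}
    {s a : EuclideanSpace ℝ (Fin n)} (ha : a ∈ projSet A s) :
    (s - a) ∈ proxNormalCone A a := by
  refine ⟨1/2, by norm_num, fun y hy => ?_⟩
  have h1 : dist s a ≤ dist s y := ha.2 ▸ infDist_le_dist_of_mem hy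
  have h2 : ‖s - a‖ ≤ ‖s - y‖ := by simpa [dist_eq_norm] using h1
  have key : ‖s - y‖ ^ 2 = ‖s - a‖ ^ 2 - 2 * (inner ℝ (s - a) (y - a) : ℝ) + ‖y - a‖ ^ 2 := by
    have : s - y = (s - a) - (y - a) := by abel
    rw [this, @norm_sub_sq_real]
  nlinarith [sq_nonneg (‖s-y‖ - ‖s-a‖), norm_nonneg (s - y), norm_nonneg (s - a)]

/-- If `s ∉ A` (closed), a closest point of `A` to `s` lies on the frontier of `A`. -/
lemma proj_frontier {n : ℕ} {A : Set (EuclideanSpace ℝ (Fin n))}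
    {s a : EuclideanSpace ℝ (Fin n)} (hAc : IsClosed A) (hsA : s ∉ A)
    (ha : a ∈ projSet A s) : a ∈ frontier A := by
  rw [frontier, hAc.closure_eq]
  refine ⟨ha.1, fun hint => ?_⟩
  obtain ⟨ε, hε, hball⟩ := Metric.isOpen_iff.1 isOpen_interior a hint
  have hd : 0 < dist s a := by
    rw [dist_pos]; rintro rfl; exact hsA ha.1
  set d := dist s a with hdd
  set t : ℝ := min (ε / (2 * d)) (1/2) with ht
  have ht0 : 0 < t := lt_min (by positivity) (by norm_num)
  have ht1 : t < 1 := lt_of_le_of_lt (min_le_right _ _) (by norm_num)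
  set y := a + t • (s - a) with hy
  have hya : dist y a = t * d := by
    rw [dist_eq_norm]
    simp only [hy, add_sub_cancel_left, norm_smul, Real.norm_eq_abs, abs_of_pos ht0]
    rw [hdd, dist_eq_norm]
  have hyA : y ∈ A := by
    apply interior_subset; apply hball
    rw [mem_ball, hya]
    calc t * d ≤ (ε / (2 * d)) * d := by
          apply mul_le_mul_of_nonneg_right (min_le_left _ _) hd.le
      _ = ε / 2 := by field_simp
      _ < ε := by linarith
  have hsy : dist s y = (1 - t) * d := by
    rw [dist_eq_norm]
    have : s - y = (1 - t) • (s - a) := by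
      simp only [hy]; module
    rw [this, norm_smul, Real.norm_eq_abs, abs_of_pos (by linarith), hdd, dist_eq_norm]
  have : infDist s A ≤ dist s y := infDist_le_dist_of_mem hyA
  rw [← ha.2, hsy] at this
  nlinarith

theorem stmt_15 {n : ℕ} (A S : Set (EuclideanSpace ℝ (Fin n))) (hA : A.Nonempty)
    (hAc : IsClosed A) (hAS : A ⊆ S) (hconv : SConvexSet A S)
    (s : EuclideanSpace ℝ (Fin n)) (hs : s ∈ S)
    (hseg : (⋃ a ∈ projSet A s, segment ℝ a s) ⊆ S) :
    ∃! a, a ∈ projSet A s := by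
  by_cases hsA : s ∈ A
  · refine ⟨s, ⟨hsA, by simp [infDist_zero_of_mem hsA]⟩, fun a ha => ?_⟩
    have := ha.2
    rw [infDist_zero_of_mem hsA, dist_eq_zero] at this
    exact this.symm
  · obtain ⟨a₀, ha₀A, ha₀⟩ := hAc.exists_infDist_eq_dist hA s
    refine ⟨a₀, ⟨ha₀A, by rw [← ha₀]⟩, fun a ha => ?_⟩
    have ha₀p : a₀ ∈ projSet A s := ⟨ha₀A, by rw [← ha₀]⟩
    by_contra hne
    have hfa := proj_frontier hAc hsA ha
    have hfa₀ := proj_frontier hAc hsA ha₀p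
    have hsegp : ∀ b ∈ projSet A s, segment ℝ b s ⊆ S := fun b hb x hx =>
      hseg (mem_biUnion hb hx)
    rcases hconv s ⟨hs, hsA⟩ a hfa a₀ hfa₀ hne (hsegp a ha) (hsegp a₀ ha₀p) with h | h
    · exact h (proj_normal ha)
    · exact h (proj_normal ha₀p)
end

section
/- Let A ⊆ ℝⁿ be nonempty and closed, and r : bdry A → (0, +∞) continuous. Define bdry_r(int A) := {a ∈ bdry(int A) : ∃ unit ζ ∈ N_A^P(a) with ρ(a, ζ) ≥ r(a)}, where ρ(a,ζ) := sup{ρ > 0 : B(a + ρζ; ρ) ∩ A = ∅}. Then bdry_r(int A) is a closed subset of ℝⁿ. -/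
open Metric Set ENNReal

/-- `ρ(a, ζ)`: the supremum (in `ℝ≥0∞`) of the radii `ρ > 0` such that the open
ball `B(a + ρζ; ρ)` is disjoint from `A`. -/
noncomputable def rhoSup {n : ℕ} (A : Set (EuclideanSpace ℝ (Fin n)))
    (a ζ : EuclideanSpace ℝ (Fin n)) : ℝ≥0∞ :=
  ⨆ ρ ∈ {ρ : ℝ | 0 < ρ ∧ Metric.ball (a + ρ • ζ) ρ ∩ A = ∅}, ENNReal.ofReal ρ


lemma mem_ball_iff_inner' {n : ℕ} (a ζ x : EuclideanSpace ℝ (Fin n)) (hζ : ‖ζ‖ = 1)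
    {ρ : ℝ} (hρ : 0 < ρ) :
    x ∈ Metric.ball (a + ρ • ζ) ρ ↔ ‖x - a‖ ^ 2 / (2 * ρ) < inner ℝ ζ (x - a) := by
  rw [Metric.mem_ball, dist_eq_norm, div_lt_iff₀ (by positivity)]
  have h1 : x - (a + ρ • ζ) = (x - a) - ρ • ζ := by abel
  rw [h1]
  have h2 : ‖(x - a) - ρ • ζ‖ ^ 2
      = ‖x - a‖ ^ 2 - 2 * (ρ * inner ℝ ζ (x - a)) + ρ ^ 2 := by
    rw [norm_sub_sq_real, real_inner_smul_right, real_inner_comm, norm_smul]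
    rw [hζ]
    simp [abs_of_pos hρ]
  constructor
  · intro h
    nlinarith [norm_nonneg ((x - a) - ρ • ζ), h2]
  · intro h
    nlinarith [norm_nonneg ((x - a) - ρ • ζ), h2]

lemma rhoSup_ge_iff' {n : ℕ} (A : Set (EuclideanSpace ℝ (Fin n)))
    (a ζ : EuclideanSpace ℝ (Fin n)) (hζ : ‖ζ‖ = 1) {r : ℝ} (hr : 0 < r) :
    ENNReal.ofReal r ≤ rhoSup A a ζ ↔
      ∀ x ∈ A, (inner ℝ ζ (x - a) : ℝ) ≤ ‖x - a‖ ^ 2 / (2 * r) := by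
  constructor
  · intro h x hx
    by_contra hc
    push_neg at hc
    set t : ℝ := inner ℝ ζ (x - a) with ht
    have htpos : 0 < t := lt_of_le_of_lt (by positivity) hc
    have hρ₀ : ‖x - a‖ ^ 2 / (2 * t) < r := by
      rw [div_lt_iff₀ (by positivity)]
      rw [div_lt_iff₀ (by positivity)] at hc
      nlinarith
    have hlt : ENNReal.ofReal (‖x - a‖ ^ 2 / (2 * t)) < rhoSup A a ζ :=
      lt_of_lt_of_le ((ENNReal.ofReal_lt_ofReal_iff hr).mpr hρ₀) h
    rw [rhoSup, lt_iSup_iff] at hlt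
    obtain ⟨ρ, hρ⟩ := hlt
    have hρS : ρ ∈ {ρ : ℝ | 0 < ρ ∧ Metric.ball (a + ρ • ζ) ρ ∩ A = ∅} := by
      by_contra hn
      simp [hn] at hρ
    rw [iSup_pos hρS] at hρ
    have hρlt : ‖x - a‖ ^ 2 / (2 * t) < ρ :=
      (ENNReal.ofReal_lt_ofReal_iff hρS.1).mp hρ
    have hxball : x ∈ Metric.ball (a + ρ • ζ) ρ := by
      rw [mem_ball_iff_inner' a ζ x hζ hρS.1, div_lt_iff₀ (by linarith [hρS.1])]
      rw [div_lt_iff₀ (by positivity)] at hρlt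
      nlinarith
    have : x ∈ Metric.ball (a + ρ • ζ) ρ ∩ A := ⟨hxball, hx⟩
    rw [hρS.2] at this
    exact this
  · intro h
    have hmem : r ∈ {ρ : ℝ | 0 < ρ ∧ Metric.ball (a + ρ • ζ) ρ ∩ A = ∅} := by
      refine ⟨hr, ?_⟩
      ext x
      simp only [mem_inter_iff, mem_empty_iff_false, iff_false, not_and]
      intro hxb hxA
      rw [mem_ball_iff_inner' a ζ x hζ hr] at hxb
      exact absurd (h x hxA) (not_le.mpr hxb)
    exact le_iSup₂ (f := fun ρ _ => ENNReal.ofReal ρ) r hmem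

theorem stmt_17 {n : ℕ} (A : Set (EuclideanSpace ℝ (Fin n))) (hA : A.Nonempty)
    (hAc : IsClosed A) (r : EuclideanSpace ℝ (Fin n) → ℝ)
    (hrpos : ∀ a ∈ frontier A, 0 < r a) (hrcont : ContinuousOn r (frontier A)) :
    IsClosed {a ∈ frontier (interior A) |
      ∃ ζ, ‖ζ‖ = 1 ∧ ζ ∈ proxNormalCone A a ∧
        ENNReal.ofReal (r a) ≤ rhoSup A a ζ} := by
  rw [← isSeqClosed_iff_isClosed]
  intro u a hu hlim
  choose ζ hζ1 hζcone hζρ using fun k => (hu k).2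
  have hfr : ∀ k, u k ∈ frontier (interior A) := fun k => (hu k).1
  have hsub : frontier (interior A) ⊆ frontier A := frontier_interior_subset
  have haf : a ∈ frontier (interior A) :=
    isClosed_frontier.mem_of_tendsto hlim (Filter.Eventually.of_forall hfr)
  have hra : 0 < r a := hrpos a (hsub haf)
  -- r along the sequence
  have hrt : Filter.Tendsto (fun k => r (u k)) Filter.atTop (nhds (r a)) := by
    have h1 : Filter.Tendsto u Filter.atTop (nhdsWithin a (frontier A)) :=
      tendsto_nhdsWithin_iff.mpr ⟨hlim, Filter.Eventually.of_forall fun k => hsub (hfr k)⟩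
    exact (hrcont a (hsub haf)).tendsto.comp h1
  -- convergent subsequence of unit normals
  have hζs : ∀ k, ζ k ∈ Metric.sphere (0 : EuclideanSpace ℝ (Fin n)) 1 := by
    intro k; simp [hζ1 k]
  obtain ⟨ζ₀, hζ₀s, φ, hφ, hζt⟩ := (isCompact_sphere (0 : EuclideanSpace ℝ (Fin n)) 1).tendsto_subseq hζs
  have hζ₀ : ‖ζ₀‖ = 1 := by simpa using hζ₀s
  have hulim : Filter.Tendsto (fun k => u (φ k)) Filter.atTop (nhds a) :=
    hlim.comp hφ.tendsto_atTop
  have hrt' : Filter.Tendsto (fun k => r (u (φ k))) Filter.atTop (nhds (r a)) :=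
    hrt.comp hφ.tendsto_atTop
  have hkey : ∀ x ∈ A, (inner ℝ ζ₀ (x - a) : ℝ) ≤ ‖x - a‖ ^ 2 / (2 * r a) := by
    intro x hx
    have hk : ∀ k, (inner ℝ (ζ (φ k)) (x - u (φ k)) : ℝ)
        ≤ ‖x - u (φ k)‖ ^ 2 / (2 * r (u (φ k))) := fun k =>
      ((rhoSup_ge_iff' A (u (φ k)) (ζ (φ k)) (hζ1 (φ k))
        (hrpos _ (hsub (hfr (φ k))))).mp (hζρ (φ k))) x hx
    exact le_of_tendsto_of_tendsto'
      (hζt.inner (tendsto_const_nhds.sub hulim))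
      ((((tendsto_const_nhds.sub hulim).norm.pow 2).div
        (tendsto_const_nhds.mul hrt') (by positivity))) hk
  refine ⟨haf, ζ₀, hζ₀, ?_, ?_⟩
  · refine ⟨(2 * r a)⁻¹, by positivity, fun y hy => ?_⟩
    calc (inner ℝ ζ₀ (y - a) : ℝ) ≤ ‖y - a‖ ^ 2 / (2 * r a) := hkey y hy
      _ = (2 * r a)⁻¹ * ‖y - a‖ ^ 2 := by ring
  · exact (rhoSup_ge_iff' A a ζ₀ hζ₀ hra).mpr hkey
end
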